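/- In ℚ[a0,...,a7], the constant coefficient c0 of the quadratic satisfied by v in the MMR elimination factors as c0 = f21·f22·f23, i.e., the product (det A_Σ(1))·(det A_Σ(2))·(det A_Σ(3)) equals the resultant-derived sextic c0 defined by c0 = (c1 − f3²)/4 with c1 = f1²·f4. -/
import Mathlib


open MvPolynomial in
noncomputable def a0 : MvPolynomial (Fin 8) ℚ := X 0
open MvPolynomial in
noncomputable def a1 : MvPolynomial (Fin 8) ℚ := X 1
open MvPolynomial in
noncomputable def a2 : MvPolynomial (Fin 8) ℚ := X 2
open MvPolynomial in
noncomputable def a3 : MvPolynomial (Fin 8) ℚ := X 3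
open MvPolynomial in
noncomputable def a4 : MvPolynomial (Fin 8) ℚ := X 4
open MvPolynomial in
noncomputable def a5 : MvPolynomial (Fin 8) ℚ := X 5
open MvPolynomial in
noncomputable def a6 : MvPolynomial (Fin 8) ℚ := X 6
open MvPolynomial in
noncomputable def a7 : MvPolynomial (Fin 8) ℚ := X 7

theorem c0_factorization :
    (a0+a1+a2+a3+a4+a5+a6+a7)^2 * ((a0^2*a7^2 + a3^2*a4^2 + a5^2*a2^2 + a6^2*a1^2) + 4*(a0*a3*a5*a6 + a7*a4*a2*a1) - 2*(a0*a7*a3*a4 + a0*a7*a5*a2 + a0*a7*a6*a1 + a3*a4*a5*a2 + a3*a4*a6*a1 + a5*a2*a6*a1)) - (((a0+a3+a5+a6) - (a7+a4+a2+a1))*(a0*a7+a3*a4+a5*a2+a6*a1) - 2*(a0*a7*(a0-a7)+a3*a4*(a3-a4)+a5*a2*(a5-a2)+a6*a1*(a6-a1)) + 2*((a3*a5*a6+a0*a5*a6+a0*a3*a6+a0*a3*a5) - (a4*a2*a1+a7*a2*a1+a7*a4*a1+a7*a4*a2)))^2 = 4 * (((a0+a4)*(a7+a3) - (a1+a5)*(a6+a2))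 * ((a0+a2)*(a7+a5) - (a4+a6)*(a3+a1)) * ((a0+a1)*(a7+a6) - (a2+a3)*(a5+a4))) := by ring
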